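/- Let X ∈ R^{s×r} satisfy XᵀX = I and let Y ∈ R^{s×t} with full SVD Y = UΣVᵀ + U_⊥Σ_⊥V_⊥ᵀ, where U ∈ R^{s×r} corresponds to the r leading singular values. Set α = (1 − σ_{r+1}²(Y)/σ_r²(Y)) / (1 + σ_{r+1}²(Y)/σ_r²(Y)) (with convention 0/0 = 0). Then there exists an orthogonal matrix D̃ ∈ R^{r×r}, maximizing ⟨Dᵀ, XᵀUΣ²⟩ over orthogonal D, such that ‖UᵀY‖_F² − ‖XᵀY‖_F² ≥ α ‖D̃ᵀUᵀY − XᵀY‖_F². -/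

import Mathlib

open Matrix

/-- Squared Frobenius norm of a matrix. -/
def frobSq {a b : ℕ} (M : Matrix (Fin a) (Fin b) ℝ) : ℝ := ∑ i, ∑ j, (M i j) ^ 2

/-- Trace (Frobenius) inner product of matrices: `⟨M, N⟩ = trace(Mᵀ N)`. -/
def innerM {a b : ℕ} (M N : Matrix (Fin a) (Fin b) ℝ) : ℝ := ∑ i, ∑ j, M i j * N i j

lemma frobSq_sum {a b : ℕ} (M : Matrix (Fin a) (Fin b) ℝ) :
    frobSq M = ∑ i, ∑ j, (M i j) ^ 2 := rfl

lemma frobSq_eq_trace {a b : ℕ} (M : Matrix (Fin a) (Fin b) ℝ) :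
    frobSq M = Matrix.trace (Mᵀ * M) := by
  simp only [frobSq, Matrix.trace, Matrix.diag_apply, Matrix.mul_apply,
    Matrix.transpose_apply, pow_two]
  exact Finset.sum_comm

lemma innerM_eq_trace {a b : ℕ} (M N : Matrix (Fin a) (Fin b) ℝ) :
    innerM M N = Matrix.trace (Mᵀ * N) := by
  simp only [innerM, Matrix.trace, Matrix.diag_apply, Matrix.mul_apply,
    Matrix.transpose_apply]
  exact Finset.sum_comm

lemma mulVec_dot' {n m : ℕ} (N : Matrix (Fin m) (Fin n) ℝ) (x : Fin n → ℝ) :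
    (N *ᵥ x) ⬝ᵥ (N *ᵥ x) = x ⬝ᵥ ((Nᵀ * N) *ᵥ x) := by
  have lhs : (N *ᵥ x) ⬝ᵥ (N *ᵥ x) = ∑ i, ∑ j, ∑ k, N i j * x j * (N i k * x k) := by
    simp only [dotProduct, Matrix.mulVec, Finset.sum_mul_sum]
  have rhs : x ⬝ᵥ ((Nᵀ * N) *ᵥ x) = ∑ j, ∑ k, ∑ i, N i j * x j * (N i k * x k) := by
    simp only [dotProduct, Matrix.mulVec, Matrix.mul_apply, Matrix.transpose_apply,
      Finset.sum_mul, Finset.mul_sum]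
    refine Finset.sum_congr rfl fun j _ => Finset.sum_congr rfl fun k _ =>
      Finset.sum_congr rfl fun i _ => by ring
  rw [lhs, rhs, Finset.sum_comm]
  exact Finset.sum_congr rfl fun j _ => Finset.sum_comm

lemma trace_vecMulVec_mul {n : ℕ} (v w : Fin n → ℝ) (S : Matrix (Fin n) (Fin n) ℝ) :
    Matrix.trace (Matrix.vecMulVec v w * S) = w ⬝ᵥ (S *ᵥ v) := by
  have lhs : Matrix.trace (Matrix.vecMulVec v w * S) = ∑ a, ∑ b, w b * (S b a * v a) := by
    simp only [Matrix.trace, Matrix.diag_apply, Matrix.mul_apply, Matrix.vecMulVec_apply]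
    exact Finset.sum_congr rfl fun a _ => Finset.sum_congr rfl fun b _ => by ring
  have rhs : w ⬝ᵥ (S *ᵥ v) = ∑ b, ∑ a, w b * (S b a * v a) := by
    simp only [dotProduct, Matrix.mulVec, Finset.mul_sum]
  rw [lhs, rhs, Finset.sum_comm]

lemma vecMulVec_mul_vecMulVec' {n : ℕ} (u v w z : Fin n → ℝ) :
    Matrix.vecMulVec u v * Matrix.vecMulVec w z = (v ⬝ᵥ w) • Matrix.vecMulVec u z := by
  ext i j
  simp only [Matrix.mul_apply, Matrix.vecMulVec_apply, Matrix.smul_apply, dotProduct,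
    smul_eq_mul, Finset.sum_mul]
  exact Finset.sum_congr rfl fun k _ => by ring

lemma vecMulVec_transpose'' {n : ℕ} (v w : Fin n → ℝ) :
    (Matrix.vecMulVec v w)ᵀ = Matrix.vecMulVec w v := by
  ext i j; simp [Matrix.vecMulVec_apply, mul_comm]

lemma householder_orth {n : ℕ} (v : Fin n → ℝ) (hv : v ⬝ᵥ v ≠ 0) :
    ((1 : Matrix (Fin n) (Fin n) ℝ) - (2 / (v ⬝ᵥ v)) • Matrix.vecMulVec v v)ᵀ *
    ((1 : Matrix (Fin n) (Fin n) ℝ) - (2 / (v ⬝ᵥ v)) • Matrix.vecMulVec v v) = 1 := by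
  set a : ℝ := 2 / (v ⬝ᵥ v) with ha
  have hT : ((1 : Matrix (Fin n) (Fin n) ℝ) - a • Matrix.vecMulVec v v)ᵀ
      = 1 - a • Matrix.vecMulVec v v := by
    rw [Matrix.transpose_sub, Matrix.transpose_one, Matrix.transpose_smul, vecMulVec_transpose'']
  rw [hT, Matrix.sub_mul, Matrix.mul_sub, Matrix.mul_sub]
  simp only [Matrix.mul_one, Matrix.one_mul, Matrix.smul_mul, Matrix.mul_smul,
    vecMulVec_mul_vecMulVec', smul_smul]
  have hco : a * (a * (v ⬝ᵥ v)) = a + a := by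
    rw [ha]; field_simp; ring
  rw [hco, add_smul]
  abel

lemma dot_sq_le {n : ℕ} (x y : Fin n → ℝ) :
    (x ⬝ᵥ y) ^ 2 ≤ (x ⬝ᵥ x) * (y ⬝ᵥ y) := by
  simpa [dotProduct, pow_two] using
    Finset.sum_mul_sq_le_sq_mul_sq Finset.univ x y

open scoped MatrixOrder in
lemma psd_sqrt_exists' {r : ℕ} (S : Matrix (Fin r) (Fin r) ℝ) (hpsd : S.PosSemidef) :
    ∃ R : Matrix (Fin r) (Fin r) ℝ, R * R = S ∧ ∀ i j, R i j = R j i := by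
  have h0 : 0 ≤ S := hpsd.nonneg
  refine ⟨CFC.sqrt S, CFC.sqrt_mul_sqrt_self S h0, fun i j => ?_⟩
  have h := (CFC.sqrt_nonneg S).posSemidef.1
  have := congrFun (congrFun h i) j
  simpa [Matrix.conjTranspose_apply, star_trivial] using this.symm

lemma keyMax {r : ℕ} (M : Matrix (Fin r) (Fin r) ℝ) :
    ∃ D : Matrix (Fin r) (Fin r) ℝ, Dᵀ * D = 1 ∧
      ∀ B : Matrix (Fin r) (Fin r) ℝ,
        (∀ x : Fin r → ℝ, (B *ᵥ x) ⬝ᵥ (B *ᵥ x) ≤ x ⬝ᵥ x) →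
        Matrix.trace (B * M) ≤ Matrix.trace (D * M) := by
  classical
  set O : Set (Matrix (Fin r) (Fin r) ℝ) := {D | Dᵀ * D = 1} with hO
  have hcont : Continuous fun D : Matrix (Fin r) (Fin r) ℝ => Matrix.trace (D * M) := by
    have e : (fun D : Matrix (Fin r) (Fin r) ℝ => Matrix.trace (D * M))
        = fun D => ∑ i, ∑ k, D i k * M k i := by
      funext D; simp [Matrix.trace, Matrix.diag_apply, Matrix.mul_apply]
    rw [e]
    refine continuous_finset_sum _ fun i _ => continuous_finset_sum _ fun k _ => ?_
    fun_prop
  have hOclosed : IsClosed O := by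
    have hc2 : Continuous fun D : Matrix (Fin r) (Fin r) ℝ => Dᵀ * D := by
      refine continuous_pi fun i => continuous_pi fun j => ?_
      have e : (fun D : Matrix (Fin r) (Fin r) ℝ => (Dᵀ * D) i j)
          = fun D => ∑ k, D k i * D k j := by
        funext D; simp [Matrix.mul_apply]
      rw [e]
      exact continuous_finset_sum _ fun k _ => by fun_prop
    exact isClosed_eq hc2 continuous_const
  set K : Set (Matrix (Fin r) (Fin r) ℝ) :=
    Set.univ.pi fun _ : Fin r => Set.univ.pi fun _ : Fin r => Set.Icc (-1 : ℝ) 1 with hK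
  have hKcomp : IsCompact K :=
    isCompact_univ_pi fun _ => isCompact_univ_pi fun _ => isCompact_Icc
  have hsub : O ⊆ K := by
    intro D hD
    have hD' : Dᵀ * D = 1 := hD
    intro i _
    intro j _
    have h1 : ∑ k, D k j * D k j = 1 := by
      have := congrFun (congrFun hD' j) j
      simpa [Matrix.mul_apply, Matrix.one_apply] using this
    have h2 : D i j * D i j ≤ ∑ k, D k j * D k j :=
      Finset.single_le_sum (f := fun k => D k j * D k j)
        (fun k _ => mul_self_nonneg _) (Finset.mem_univ i)
    constructor <;> nlinarith
  have hOcomp : IsCompact O := hKcomp.of_isClosed_subset hOclosed hsub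
  have hOne : O.Nonempty := ⟨1, by simp [hO]⟩
  obtain ⟨D, hDO, hmax⟩ := hOcomp.exists_isMaxOn hOne hcont.continuousOn
  have hDorth : Dᵀ * D = 1 := hDO
  have hDDT : D * Dᵀ = 1 := mul_eq_one_comm.mp hDorth
  set S : Matrix (Fin r) (Fin r) ℝ := M * D with hS
  have htrS : Matrix.trace (D * M) = Matrix.trace S := Matrix.trace_mul_comm D M
  -- maximality against arbitrary orthogonal G
  have hG : ∀ G : Matrix (Fin r) (Fin r) ℝ, Gᵀ * G = 1 →
      Matrix.trace (G * S) ≤ Matrix.trace S := by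
    intro G hGo
    have hmem : D * G ∈ O := by
      show (D * G)ᵀ * (D * G) = 1
      rw [Matrix.transpose_mul, Matrix.mul_assoc, ← Matrix.mul_assoc Dᵀ, hDorth,
        Matrix.one_mul, hGo]
    have h1 : Matrix.trace (D * G * M) ≤ Matrix.trace (D * M) := hmax hmem
    calc Matrix.trace (G * S) = Matrix.trace (G * M * D) := by rw [hS, ← Matrix.mul_assoc]
    _ = Matrix.trace (D * (G * M)) := (Matrix.trace_mul_comm (G * M) D)
    _ = Matrix.trace (D * G * M) := by rw [Matrix.mul_assoc]
    _ ≤ Matrix.trace (D * M) := h1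
    _ = Matrix.trace S := htrS
  -- quadratic form nonnegative
  have hq : ∀ v : Fin r → ℝ, 0 ≤ v ⬝ᵥ (S *ᵥ v) := by
    intro v
    by_cases hv : v ⬝ᵥ v = 0
    · have hv0 : v = 0 := by
        funext i
        show v i = (0 : ℝ)
        have h0 : ∑ k, v k * v k = 0 := hv
        have h1 : v i * v i ≤ ∑ k, v k * v k :=
          Finset.single_le_sum (f := fun k => v k * v k)
            (fun k _ => mul_self_nonneg _) (Finset.mem_univ i)
        have h2 : v i * v i = 0 :=
          le_antisymm (by linarith) (mul_self_nonneg _)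
        exact mul_self_eq_zero.mp h2
      simp [hv0]
    · have hvpos : 0 < v ⬝ᵥ v := by
        rcases lt_or_eq_of_le (Finset.sum_nonneg fun k _ => mul_self_nonneg (v k) :
          (0:ℝ) ≤ v ⬝ᵥ v) with h | h
        · exact h
        · exact absurd h.symm hv
      have h1 := hG _ (householder_orth v hv)
      have hexp : Matrix.trace (((1 : Matrix (Fin r) (Fin r) ℝ)
          - (2 / (v ⬝ᵥ v)) • Matrix.vecMulVec v v) * S)
          = Matrix.trace S - (2 / (v ⬝ᵥ v)) * (v ⬝ᵥ (S *ᵥ v)) := by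
        rw [Matrix.sub_mul, Matrix.smul_mul, Matrix.trace_sub, Matrix.trace_smul,
          Matrix.one_mul, trace_vecMulVec_mul]
        simp
      rw [hexp] at h1
      have ha : 0 < 2 / (v ⬝ᵥ v) := by positivity
      have h2 : 0 ≤ (2 / (v ⬝ᵥ v)) * (v ⬝ᵥ (S *ᵥ v)) := by linarith
      by_contra hneg
      push_neg at hneg
      nlinarith [mul_pos ha (neg_pos.2 hneg)]
  -- symmetry
  have hHH : ∀ u w : Fin r → ℝ, u ⬝ᵥ u ≠ 0 → w ⬝ᵥ w ≠ 0 →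
      0 ≤ (w ⬝ᵥ w) * (u ⬝ᵥ (S *ᵥ u)) + (u ⬝ᵥ u) * (w ⬝ᵥ (S *ᵥ w))
        - 2 * ((u ⬝ᵥ w) * (w ⬝ᵥ (S *ᵥ u))) := by
    intro u w hu hw
    have hupos : 0 < u ⬝ᵥ u := by
      rcases lt_or_eq_of_le (Finset.sum_nonneg fun k _ => mul_self_nonneg (u k) :
        (0:ℝ) ≤ u ⬝ᵥ u) with h | h
      · exact h
      · exact absurd h.symm hu
    have hwpos : 0 < w ⬝ᵥ w := by
      rcases lt_or_eq_of_le (Finset.sum_nonneg fun k _ => mul_self_nonneg (w k) :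
        (0:ℝ) ≤ w ⬝ᵥ w) with h | h
      · exact h
      · exact absurd h.symm hw
    set a : ℝ := 2 / (u ⬝ᵥ u) with hadef
    set b : ℝ := 2 / (w ⬝ᵥ w) with hbdef
    have hHu := householder_orth u hu
    have hHw := householder_orth w hw
    set Hu : Matrix (Fin r) (Fin r) ℝ := 1 - a • Matrix.vecMulVec u u with hHudef
    set Hw : Matrix (Fin r) (Fin r) ℝ := 1 - b • Matrix.vecMulVec w w with hHwdef
    have hTu : Huᵀ = Hu := by
      rw [hHudef, Matrix.transpose_sub, Matrix.transpose_one, Matrix.transpose_smul,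
        vecMulVec_transpose'']
    have hTw : Hwᵀ = Hw := by
      rw [hHwdef, Matrix.transpose_sub, Matrix.transpose_one, Matrix.transpose_smul,
        vecMulVec_transpose'']
    have hHu2 : Hu * Hu = 1 := by have := hHu; rwa [hTu] at this
    have hHw2 : Hw * Hw = 1 := by have := hHw; rwa [hTw] at this
    have horth : (Hu * Hw)ᵀ * (Hu * Hw) = 1 := by
      rw [Matrix.transpose_mul, hTu, hTw, Matrix.mul_assoc, ← Matrix.mul_assoc Hu Hu Hw,
        hHu2, Matrix.one_mul, hHw2]
    have h1 := hG _ horth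
    have hexp : (Hu * Hw) * S = S - a • (Matrix.vecMulVec u u * S)
        - b • (Matrix.vecMulVec w w * S)
        + (a * (b * (u ⬝ᵥ w))) • (Matrix.vecMulVec u w * S) := by
      rw [hHudef, hHwdef, Matrix.sub_mul, Matrix.mul_sub, Matrix.mul_sub]
      simp only [Matrix.one_mul, Matrix.mul_one, Matrix.smul_mul, Matrix.mul_smul,
        vecMulVec_mul_vecMulVec', smul_smul, Matrix.sub_mul]
      module
    have htr : Matrix.trace ((Hu * Hw) * S) = Matrix.trace S - a * (u ⬝ᵥ (S *ᵥ u))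
        - b * (w ⬝ᵥ (S *ᵥ w)) + (a * (b * (u ⬝ᵥ w))) * (w ⬝ᵥ (S *ᵥ u)) := by
      rw [hexp, Matrix.trace_add, Matrix.trace_sub, Matrix.trace_sub, Matrix.trace_smul,
        Matrix.trace_smul, Matrix.trace_smul, trace_vecMulVec_mul, trace_vecMulVec_mul,
        trace_vecMulVec_mul]
      simp
    rw [htr] at h1
    have h2 : 0 ≤ a * (u ⬝ᵥ (S *ᵥ u)) + b * (w ⬝ᵥ (S *ᵥ w))
        - (a * (b * (u ⬝ᵥ w))) * (w ⬝ᵥ (S *ᵥ u)) := by linarith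
    have hgoal : (w ⬝ᵥ w) * (u ⬝ᵥ (S *ᵥ u)) + (u ⬝ᵥ u) * (w ⬝ᵥ (S *ᵥ w))
        - 2 * ((u ⬝ᵥ w) * (w ⬝ᵥ (S *ᵥ u)))
        = (u ⬝ᵥ u) * (w ⬝ᵥ w) / 2 * (a * (u ⬝ᵥ (S *ᵥ u)) + b * (w ⬝ᵥ (S *ᵥ w))
          - (a * (b * (u ⬝ᵥ w))) * (w ⬝ᵥ (S *ᵥ u))) := by
      rw [hadef, hbdef]
      field_simp
    rw [hgoal]
    have hpos : 0 ≤ (u ⬝ᵥ u) * (w ⬝ᵥ w) / 2 := by positivity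
    exact mul_nonneg hpos h2
  have hsym : ∀ i j, S i j = S j i := by
    intro i j
    by_cases hij : i = j
    · rw [hij]
    · set u : Fin r → ℝ := Pi.single i (1:ℝ) with hu
      have hu1 : u ⬝ᵥ u = 1 := by simp [hu, single_dotProduct]
      have hSii : u ⬝ᵥ (S *ᵥ u) = S i i := by
        simp [hu, Matrix.mulVec_single, single_dotProduct]
      have hp : 0 ≤ S i i + S j j := by
        have h1 := hq (Pi.single i 1)
        have h2 := hq (Pi.single j 1)
        simp [Matrix.mulVec_single, single_dotProduct] at h1 h2
        linarith
      set p : ℝ := S i i + S j j with hpdef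
      set q : ℝ := S i j - S j i with hqdef
      have key : ∀ t : ℝ, 0 ≤ t ^ 2 * p + t * q := by
        intro t
        set w : Fin r → ℝ := Pi.single i (1:ℝ) + Pi.single j t with hw
        have hww : w ⬝ᵥ w = 1 + t ^ 2 := by
          simp [hw, add_dotProduct, dotProduct_add,
            single_dotProduct, dotProduct_single,
            Pi.single_apply, hij, Ne.symm hij]
          try ring
        have hww0 : w ⬝ᵥ w ≠ 0 := by rw [hww]; positivity
        have h := hHH u w (by rw [hu1]; norm_num) hww0
        have huw : u ⬝ᵥ w = 1 := by
          simp [hu, hw, dotProduct_add, single_dotProduct,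
            Pi.single_apply, hij, Ne.symm hij]
        have hwSu : w ⬝ᵥ (S *ᵥ u) = S i i + t * S j i := by
          simp [hu, hw, Matrix.mulVec_single, add_dotProduct,
            single_dotProduct]
          try ring
        have hwSw : w ⬝ᵥ (S *ᵥ w) = S i i + t * S i j + t * S j i + t ^ 2 * S j j := by
          simp [hu, hw, Matrix.mulVec_add, Matrix.mulVec_single,
            add_dotProduct, single_dotProduct,
            dotProduct_add]
          try ring
        rw [hww, huw, hu1, hSii, hwSu, hwSw] at h
        have e2 : t ^ 2 * p + t * q
            = (1 + t ^ 2) * S i i + 1 * (S i i + t * S i j + t * S j i + t ^ 2 * S j j)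
              - 2 * (1 * (S i i + t * S j i)) := by
          rw [hpdef, hqdef]; ring
        rw [e2]
        linarith [h]
      have hq0 : q = 0 := by
        have hp1 : 0 < p + 1 := by linarith
        have h := key (-q / (p + 1))
        have e : (-q / (p + 1)) ^ 2 * p + (-q / (p + 1)) * q
            = -(q ^ 2 * (1 / (p + 1) ^ 2)) := by
          field_simp
          ring
        rw [e] at h
        have h2 : q ^ 2 * (1 / (p + 1) ^ 2) ≤ 0 := by linarith
        by_contra hne
        have hq2 : 0 < q ^ 2 := by positivity
        have h3 : 0 < 1 / (p + 1) ^ 2 := by positivity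
        nlinarith [mul_pos hq2 h3]
      have : S i j - S j i = 0 := hq0
      linarith
  have hherm : S.IsHermitian := by
    ext i j
    simp only [Matrix.conjTranspose_apply, star_trivial]
    exact hsym j i
  have hpsd : S.PosSemidef := by
    refine Matrix.PosSemidef.of_dotProduct_mulVec_nonneg hherm fun x => ?_
    have : star x = x := by funext k; simp
    rw [this]
    exact hq x
  obtain ⟨R, hRR, hRsym⟩ := psd_sqrt_exists' S hpsd
  refine ⟨D, hDorth, ?_⟩
  intro B hB
  -- trace (B * M) = trace ((Dᵀ * B) * S)
  have hM : M = S * Dᵀ := by rw [hS, Matrix.mul_assoc, hDDT, Matrix.mul_one]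
  set B2 : Matrix (Fin r) (Fin r) ℝ := Dᵀ * B with hB2def
  have hBM : B * M = (B * S) * Dᵀ := by
    rw [hS, Matrix.mul_assoc B, Matrix.mul_assoc M, hDDT, Matrix.mul_one]
  have htr1 : Matrix.trace (B * M) = Matrix.trace (B2 * S) := by
    rw [hBM]
    calc Matrix.trace ((B * S) * Dᵀ)
        = Matrix.trace (Dᵀ * (B * S)) := Matrix.trace_mul_comm (B * S) Dᵀ
    _ = Matrix.trace (B2 * S) := by rw [hB2def, Matrix.mul_assoc]
  have hB2 : ∀ x : Fin r → ℝ, (B2 *ᵥ x) ⬝ᵥ (B2 *ᵥ x) ≤ x ⬝ᵥ x := by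
    intro x
    have e : B2 *ᵥ x = Dᵀ *ᵥ (B *ᵥ x) := by rw [hB2def, ← Matrix.mulVec_mulVec]
    rw [e, mulVec_dot']
    have : Dᵀᵀ * Dᵀ = 1 := by rw [Matrix.transpose_transpose]; exact hDDT
    rw [this, Matrix.one_mulVec]
    exact hB x
  have hstep : Matrix.trace (B2 * S) ≤ Matrix.trace S := by
    have e1 : Matrix.trace (B2 * S) = Matrix.trace (R * (B2 * R)) := by
      rw [← hRR, ← Matrix.mul_assoc, Matrix.trace_mul_comm]
    rw [e1]
    have e2 : Matrix.trace (R * (B2 * R)) = ∑ i, (fun k => R k i) ⬝ᵥ (B2 *ᵥ (fun k => R k i)) := by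
      simp only [Matrix.trace, Matrix.diag_apply, Matrix.mul_apply, dotProduct,
        Matrix.mulVec, Finset.mul_sum]
      refine Finset.sum_congr rfl fun i _ => Finset.sum_congr rfl fun j _ => ?_
      rw [hRsym i j]
    rw [e2]
    have e3 : Matrix.trace S = ∑ i, S i i := rfl
    rw [e3]
    refine Finset.sum_le_sum fun i _ => ?_
    set x : Fin r → ℝ := fun k => R k i with hx
    have hxx : x ⬝ᵥ x = S i i := by
      have : (R * R) i i = ∑ k, R i k * R k i := Matrix.mul_apply
      rw [← hRR]
      rw [this]
      simp only [dotProduct, hx]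
      exact Finset.sum_congr rfl fun k _ => by rw [hRsym i k]
    have hcs : (x ⬝ᵥ (B2 *ᵥ x)) ^ 2 ≤ (x ⬝ᵥ x) * ((B2 *ᵥ x) ⬝ᵥ (B2 *ᵥ x)) := dot_sq_le _ _
    have hxnn : 0 ≤ x ⬝ᵥ x := Finset.sum_nonneg fun k _ => mul_self_nonneg _
    have hcon := hB2 x
    nlinarith [hcs, hcon, hxnn]
  rw [htr1, htrS]
  exact hstep

set_option maxHeartbeats 1600000

/-- Let `Xᵀ X = I` and let `Y = U Σ Vᵀ + U⊥ Σ⊥ V⊥ᵀ` be a full SVD of `Y`. -/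
theorem stmt_5 {s t r s' t' : ℕ} (hr : 0 < r)
    (X U : Matrix (Fin s) (Fin r) ℝ) (hX : Xᵀ * X = 1) (hU : Uᵀ * U = 1)
    (V : Matrix (Fin t) (Fin r) ℝ) (hV : Vᵀ * V = 1)
    (Up : Matrix (Fin s) (Fin s') ℝ) (hUp : Upᵀ * Up = 1)
    (Vp : Matrix (Fin t) (Fin t') ℝ) (hVp : Vpᵀ * Vp = 1)
    (hUUp : Uᵀ * Up = 0) (hVVp : Vᵀ * Vp = 0)
    (hUfull : U * Uᵀ + Up * Upᵀ = 1) (hVfull : V * Vᵀ + Vp * Vpᵀ = 1)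
    (d : Fin r → ℝ) (hd0 : ∀ i, 0 ≤ d i) (hdmono : ∀ i j : Fin r, i ≤ j → d j ≤ d i)
    (dp : Fin s' → ℝ) (hdp0 : ∀ i, 0 ≤ dp i)
    (b : ℝ) (hb : ∀ i, dp i ≤ b) (hbmax : b = 0 ∨ ∃ i, b = dp i)
    (hgap : b ≤ d ⟨r - 1, by omega⟩)
    (Y : Matrix (Fin s) (Fin t) ℝ)
    (hY : Y = U * Matrix.diagonal d * Vᵀ +
      Up * (Matrix.of fun (i : Fin s') (j : Fin t') =>
        if (i : ℕ) = (j : ℕ) then dp i else 0) * Vpᵀ) :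
    ∃ D : Matrix (Fin r) (Fin r) ℝ, Dᵀ * D = 1 ∧
      (∀ D' : Matrix (Fin r) (Fin r) ℝ, D'ᵀ * D' = 1 →
        innerM D'ᵀ (Xᵀ * U * (Matrix.diagonal d * Matrix.diagonal d)) ≤
          innerM Dᵀ (Xᵀ * U * (Matrix.diagonal d * Matrix.diagonal d))) ∧
      frobSq (Uᵀ * Y) - frobSq (Xᵀ * Y) ≥
        (1 - b ^ 2 / (d ⟨r - 1, by omega⟩) ^ 2) /
            (1 + b ^ 2 / (d ⟨r - 1, by omega⟩) ^ 2) *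
          frobSq (Dᵀ * (Uᵀ * Y) - Xᵀ * Y) := by
  classical
  set δ : ℝ := d ⟨r - 1, by omega⟩ with hδdef
  set Dg : Matrix (Fin r) (Fin r) ℝ := Matrix.diagonal d with hDg
  set A : Matrix (Fin r) (Fin r) ℝ := Xᵀ * U with hA
  set C : Matrix (Fin r) (Fin s') ℝ := Xᵀ * Up with hC
  set Sp : Matrix (Fin s') (Fin t') ℝ :=
    Matrix.of (fun (i : Fin s') (j : Fin t') =>
      if (i : ℕ) = (j : ℕ) then dp i else 0) with hSp
  have hDgT : Dgᵀ = Dg := by rw [hDg, Matrix.diagonal_transpose]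
  obtain ⟨D, hDorth, hDmax⟩ := keyMax (A * (Dg * Dg))
  have hDDT : D * Dᵀ = 1 := mul_eq_one_comm.mp hDorth
  refine ⟨D, hDorth, ?_, ?_⟩
  · intro D' hD'
    rw [innerM_eq_trace, innerM_eq_trace, Matrix.transpose_transpose, Matrix.transpose_transpose]
    exact hDmax D' (fun x => le_of_eq (by rw [mulVec_dot', hD', Matrix.one_mulVec]))
  -- main inequality
  have hUY : Uᵀ * Y = Dg * Vᵀ := by
    rw [hY]
    simp only [Matrix.mul_add, ← Matrix.mul_assoc, hU, hUUp, Matrix.one_mul,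
      Matrix.zero_mul, add_zero, ← hDg, ← hSp]
  have hXY : Xᵀ * Y = A * Dg * Vᵀ + C * Sp * Vpᵀ := by
    rw [hY]
    simp only [Matrix.mul_add, ← Matrix.mul_assoc, ← hA, ← hC, ← hDg, ← hSp]
  have hVpV : Vpᵀ * V = 0 := by
    have h := congrArg Matrix.transpose hVVp
    simpa [Matrix.transpose_mul] using h
  have hdecomp : ∀ (P : Matrix (Fin r) (Fin r) ℝ) (Q : Matrix (Fin r) (Fin t') ℝ),
      frobSq (P * Vᵀ + Q * Vpᵀ) = Matrix.trace (Pᵀ * P) + Matrix.trace (Qᵀ * Q) := by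
    intro P Q
    rw [frobSq_eq_trace]
    have hT : (P * Vᵀ + Q * Vpᵀ)ᵀ = V * Pᵀ + Vp * Qᵀ := by
      rw [Matrix.transpose_add, Matrix.transpose_mul, Matrix.transpose_mul,
        Matrix.transpose_transpose, Matrix.transpose_transpose]
    rw [hT, Matrix.add_mul, Matrix.mul_add, Matrix.mul_add]
    simp only [Matrix.trace_add]
    have h11 : Matrix.trace (V * Pᵀ * (P * Vᵀ)) = Matrix.trace (Pᵀ * P) := by
      rw [Matrix.trace_mul_comm, Matrix.mul_assoc, ← Matrix.mul_assoc Vᵀ V Pᵀ, hV,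
        Matrix.one_mul]
      exact Matrix.trace_mul_comm _ _
    have h22 : Matrix.trace (Vp * Qᵀ * (Q * Vpᵀ)) = Matrix.trace (Qᵀ * Q) := by
      rw [Matrix.trace_mul_comm, Matrix.mul_assoc, ← Matrix.mul_assoc Vpᵀ Vp Qᵀ, hVp,
        Matrix.one_mul]
      exact Matrix.trace_mul_comm _ _
    have h12 : Matrix.trace (V * Pᵀ * (Q * Vpᵀ)) = 0 := by
      rw [Matrix.trace_mul_comm, Matrix.mul_assoc, ← Matrix.mul_assoc Vpᵀ V Pᵀ, hVpV,
        Matrix.zero_mul, Matrix.mul_zero, Matrix.trace_zero]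
    have h21 : Matrix.trace (Vp * Qᵀ * (P * Vᵀ)) = 0 := by
      rw [Matrix.trace_mul_comm, Matrix.mul_assoc, ← Matrix.mul_assoc Vᵀ Vp Qᵀ, hVVp,
        Matrix.zero_mul, Matrix.mul_zero, Matrix.trace_zero]
    rw [h11, h22, h12, h21]
    ring
  set T : ℝ := Matrix.trace (Dgᵀ * Dg) with hT
  set P : ℝ := Matrix.trace ((A * Dg)ᵀ * (A * Dg)) with hP
  set c : ℝ := Matrix.trace ((C * Sp)ᵀ * (C * Sp)) with hc
  set τ : ℝ := Matrix.trace (D * (A * (Dg * Dg))) with hτ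
  set ρ : ℝ := Matrix.trace (Cᵀ * C) with hρ
  have h1 : frobSq (Uᵀ * Y) = T := by
    have e : Uᵀ * Y = Dg * Vᵀ + (0 : Matrix (Fin r) (Fin t') ℝ) * Vpᵀ := by
      rw [hUY, Matrix.zero_mul, add_zero]
    rw [e, hdecomp]
    simp [hT]
  have h2 : frobSq (Xᵀ * Y) = P + c := by
    rw [hXY, hdecomp]
  have h3 : frobSq (Dᵀ * (Uᵀ * Y) - Xᵀ * Y) = (T + P - 2 * τ) + c := by
    have e0 : Dᵀ * (Uᵀ * Y) - Xᵀ * Y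
        = (Dᵀ * Dg - A * Dg) * Vᵀ + (-(C * Sp)) * Vpᵀ := by
      rw [hUY, hXY, Matrix.sub_mul, Matrix.neg_mul, ← Matrix.mul_assoc]
      abel
    rw [e0, hdecomp]
    have e11 : Matrix.trace ((Dᵀ * Dg)ᵀ * (Dᵀ * Dg)) = T := by
      rw [Matrix.transpose_mul, Matrix.transpose_transpose, Matrix.mul_assoc,
        ← Matrix.mul_assoc D Dᵀ Dg, hDDT, Matrix.one_mul]
    have e12 : Matrix.trace ((Dᵀ * Dg)ᵀ * (A * Dg)) = τ := by
      rw [Matrix.transpose_mul, Matrix.transpose_transpose, hDgT, Matrix.trace_mul_comm,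
        Matrix.mul_assoc A Dg (Dg * D), ← Matrix.mul_assoc Dg Dg D,
        ← Matrix.mul_assoc A (Dg * Dg) D, Matrix.trace_mul_comm, hτ, Matrix.mul_assoc]
    have e21 : Matrix.trace ((A * Dg)ᵀ * (Dᵀ * Dg)) = τ := by
      have e : ((Dᵀ * Dg)ᵀ * (A * Dg))ᵀ = (A * Dg)ᵀ * (Dᵀ * Dg) := by
        rw [Matrix.transpose_mul, Matrix.transpose_transpose]
      rw [← e, Matrix.trace_transpose, e12]
    have eexp : Matrix.trace ((Dᵀ * Dg - A * Dg)ᵀ * (Dᵀ * Dg - A * Dg))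
        = Matrix.trace ((Dᵀ * Dg)ᵀ * (Dᵀ * Dg)) - Matrix.trace ((Dᵀ * Dg)ᵀ * (A * Dg))
          - Matrix.trace ((A * Dg)ᵀ * (Dᵀ * Dg))
          + Matrix.trace ((A * Dg)ᵀ * (A * Dg)) := by
      rw [Matrix.transpose_sub, Matrix.sub_mul, Matrix.mul_sub, Matrix.mul_sub,
        Matrix.trace_sub, Matrix.trace_sub, Matrix.trace_sub]
      ring
    have eneg : Matrix.trace ((-(C * Sp))ᵀ * (-(C * Sp))) = c := by
      rw [Matrix.transpose_neg, Matrix.neg_mul, Matrix.mul_neg, neg_neg]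
    rw [eexp, eneg, e11, e12, e21, ← hP]
    ring
  have hACC : A * Aᵀ + C * Cᵀ = 1 := by
    rw [hA, hC]
    have e : Xᵀ * U * (Xᵀ * U)ᵀ + Xᵀ * Up * (Xᵀ * Up)ᵀ
        = Xᵀ * ((U * Uᵀ + Up * Upᵀ) * X) := by
      simp only [Matrix.transpose_mul, Matrix.transpose_transpose, Matrix.add_mul,
        Matrix.mul_add, Matrix.mul_assoc]
    rw [e, hUfull, Matrix.one_mul, hX]
  have hτP : P ≤ τ := by
    have hAcontr : ∀ x : Fin r → ℝ, (Aᵀ *ᵥ x) ⬝ᵥ (Aᵀ *ᵥ x) ≤ x ⬝ᵥ x := by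
      intro x
      rw [mulVec_dot', Matrix.transpose_transpose]
      have h1 : (A * Aᵀ) *ᵥ x = x - (C * Cᵀ) *ᵥ x := by
        have h0 := congrArg (fun M : Matrix (Fin r) (Fin r) ℝ => M *ᵥ x) hACC
        simp only [Matrix.add_mulVec, Matrix.one_mulVec] at h0
        exact eq_sub_of_add_eq h0
      rw [h1, dotProduct_sub]
      have h2 : 0 ≤ x ⬝ᵥ ((C * Cᵀ) *ᵥ x) := by
        have e2 := mulVec_dot' Cᵀ x
        rw [Matrix.transpose_transpose] at e2
        rw [← e2]
        exact Finset.sum_nonneg fun k _ => mul_self_nonneg _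
      linarith
    have h := hDmax Aᵀ hAcontr
    have eP : P = Matrix.trace (Aᵀ * (A * (Dg * Dg))) := by
      rw [hP, Matrix.transpose_mul, hDgT, Matrix.trace_mul_comm,
        Matrix.mul_assoc A Dg (Dg * Aᵀ), ← Matrix.mul_assoc Dg Dg Aᵀ,
        ← Matrix.mul_assoc A (Dg * Dg) Aᵀ]
      exact Matrix.trace_mul_comm _ _
    rw [eP]
    exact h
  have hAAsym : ∀ j k : Fin r, (Aᵀ * A) k j = (Aᵀ * A) j k := by
    intro j k
    rw [Matrix.mul_apply, Matrix.mul_apply]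
    simp only [Matrix.transpose_apply]
    exact Finset.sum_congr rfl fun i _ => mul_comm _ _
  have hg0 : ∀ j : Fin r, 0 ≤ (Aᵀ * A) j j := by
    intro j
    rw [Matrix.mul_apply]
    simp only [Matrix.transpose_apply]
    exact Finset.sum_nonneg fun i _ => mul_self_nonneg _
  have hg1 : ∀ j : Fin r, (Aᵀ * A) j j ≤ 1 := by
    have hkey : (Aᵀ * A) * (Aᵀ * A) + (Aᵀ * C) * (Cᵀ * A) = Aᵀ * A := by
      have e : (Aᵀ * A) * (Aᵀ * A) + (Aᵀ * C) * (Cᵀ * A)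
          = Aᵀ * ((A * Aᵀ + C * Cᵀ) * A) := by
        simp only [Matrix.add_mul, Matrix.mul_add, Matrix.mul_assoc]
      rw [e, hACC, Matrix.one_mul]
    intro j
    have he := congrFun (congrFun hkey j) j
    have he' : ((Aᵀ * A) * (Aᵀ * A)) j j + ((Aᵀ * C) * (Cᵀ * A)) j j = (Aᵀ * A) j j := by
      simpa [Matrix.add_apply] using he
    have hs : (Aᵀ * A) j j * (Aᵀ * A) j j ≤ ((Aᵀ * A) * (Aᵀ * A)) j j := by
      rw [Matrix.mul_apply]
      refine Finset.single_le_sum (f := fun k => (Aᵀ * A) j k * (Aᵀ * A) k j)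
        (fun k _ => ?_) (Finset.mem_univ j)
      show 0 ≤ (Aᵀ * A) j k * (Aᵀ * A) k j
      rw [hAAsym j k]
      exact mul_self_nonneg _
    have hcp : 0 ≤ ((Aᵀ * C) * (Cᵀ * A)) j j := by
      have e : (Cᵀ * A)ᵀ = Aᵀ * C := by
        rw [Matrix.transpose_mul, Matrix.transpose_transpose]
      rw [← e, Matrix.mul_apply]
      simp only [Matrix.transpose_apply]
      exact Finset.sum_nonneg fun k _ => mul_self_nonneg _
    nlinarith [hg0 j]
  have hTsum : T = ∑ j, d j ^ 2 := by
    rw [hT, hDgT, hDg, Matrix.diagonal_mul_diagonal, Matrix.trace_diagonal]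
    simp [pow_two]
  have hPsum : P = ∑ j, d j ^ 2 * (Aᵀ * A) j j := by
    rw [hP, ← frobSq_eq_trace, frobSq_sum, Finset.sum_comm]
    refine Finset.sum_congr rfl fun j _ => ?_
    rw [Matrix.mul_apply]
    simp only [Matrix.transpose_apply]
    rw [Finset.mul_sum]
    refine Finset.sum_congr rfl fun i _ => ?_
    rw [hDg, Matrix.mul_diagonal]
    ring
  have htrρ : ρ = ∑ j, (1 - (Aᵀ * A) j j) := by
    have e1 : C * Cᵀ = 1 - A * Aᵀ := eq_sub_of_add_eq' hACC
    have e2 : ρ = Matrix.trace (C * Cᵀ) := by rw [hρ]; exact Matrix.trace_mul_comm _ _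
    have e3 : Matrix.trace (A * Aᵀ) = Matrix.trace (Aᵀ * A) := Matrix.trace_mul_comm _ _
    rw [e2, e1, Matrix.trace_sub, Matrix.trace_one, e3, Fintype.card_fin,
      Finset.sum_sub_distrib]
    have eone : (∑ _j : Fin r, (1:ℝ)) = (r : ℝ) := by simp
    have etr : Matrix.trace (Aᵀ * A) = ∑ j, (Aᵀ * A) j j := rfl
    rw [eone, etr]
  have hρ0 : 0 ≤ ρ := by
    rw [htrρ]
    exact Finset.sum_nonneg fun j _ => by linarith [hg1 j]
  have hδ0 : 0 ≤ δ := by rw [hδdef]; exact hd0 _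
  have hTP : δ ^ 2 * ρ ≤ T - P := by
    rw [htrρ, hTsum, hPsum, Finset.mul_sum, ← Finset.sum_sub_distrib]
    refine Finset.sum_le_sum fun j _ => ?_
    have hdj : δ ≤ d j := by
      rw [hδdef]
      refine hdmono j ⟨r - 1, by omega⟩ ?_
      have hjv : (j : ℕ) < r := j.isLt
      rw [Fin.le_def]
      show (j : ℕ) ≤ r - 1
      omega
    have h2 : δ ^ 2 ≤ d j ^ 2 := pow_le_pow_left₀ hδ0 hdj 2
    have h3 : 0 ≤ 1 - (Aᵀ * A) j j := by linarith [hg1 j]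
    have h4 := mul_le_mul_of_nonneg_right h2 h3
    have h5 : d j ^ 2 * (1 - (Aᵀ * A) j j) = d j ^ 2 - d j ^ 2 * (Aᵀ * A) j j := by ring
    linarith [h4, h5]
  have hb0 : 0 ≤ b := by
    rcases hbmax with h | ⟨i, h⟩
    · rw [h]
    · rw [h]; exact hdp0 i
  have hc0 : 0 ≤ c := by
    rw [hc, ← frobSq_eq_trace, frobSq_sum]
    exact Finset.sum_nonneg fun i _ => Finset.sum_nonneg fun j _ => sq_nonneg _
  have hCSp : ∀ (i : Fin r) (l : Fin t'), (C * Sp) i l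
      = if h : (l : ℕ) < s' then C i ⟨(l : ℕ), h⟩ * dp ⟨(l : ℕ), h⟩ else 0 := by
    intro i l
    rw [Matrix.mul_apply]
    split
    case isTrue h =>
      rw [Finset.sum_eq_single (⟨(l : ℕ), h⟩ : Fin s')]
      · simp [hSp]
      · intro j _ hj
        have hne : (j : ℕ) ≠ (l : ℕ) := fun hcon => hj (Fin.ext hcon)
        simp [hSp, hne]
      · intro hmem; exact absurd (Finset.mem_univ _) hmem
    case isFalse h =>
      apply Finset.sum_eq_zero
      intro j _
      have hne : (j : ℕ) ≠ (l : ℕ) := by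
        intro hcon; exact h (hcon ▸ j.isLt)
      simp [hSp, hne]
  have hcb : c ≤ b ^ 2 * ρ := by
    have hρF : b ^ 2 * ρ = ∑ i, ∑ j : Fin s', b ^ 2 * (C i j) ^ 2 := by
      rw [hρ, ← frobSq_eq_trace, frobSq_sum, Finset.mul_sum]
      exact Finset.sum_congr rfl fun i _ => Finset.mul_sum _ _ _
    have hcF : c = ∑ i, ∑ l : Fin t', ((C * Sp) i l) ^ 2 := by
      rw [hc, ← frobSq_eq_trace, frobSq_sum]
    rw [hcF, hρF]
    refine Finset.sum_le_sum fun i _ => ?_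
    set F : ℕ → ℝ := fun k => if h : k < s' then (C i ⟨k, h⟩ * dp ⟨k, h⟩) ^ 2 else 0 with hF
    set H : ℕ → ℝ := fun k => if h : k < s' then b ^ 2 * (C i ⟨k, h⟩) ^ 2 else 0 with hH
    have hFH : ∀ k, F k ≤ H k := by
      intro k
      simp only [hF, hH]
      by_cases h : k < s'
      · rw [dif_pos h, dif_pos h]
        have h1 : dp ⟨k, h⟩ ^ 2 ≤ b ^ 2 := by nlinarith [hdp0 ⟨k, h⟩, hb ⟨k, h⟩, hb0]
        nlinarith [sq_nonneg (C i ⟨k, h⟩),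
          mul_le_mul_of_nonneg_left h1 (sq_nonneg (C i ⟨k, h⟩))]
      · rw [dif_neg h, dif_neg h]
    have hF0 : ∀ k, 0 ≤ F k := by
      intro k
      simp only [hF]
      by_cases h : k < s'
      · rw [dif_pos h]; exact sq_nonneg _
      · rw [dif_neg h]
    have e1 : ∑ l : Fin t', ((C * Sp) i l) ^ 2 = ∑ k ∈ Finset.range t', F k := by
      rw [← Fin.sum_univ_eq_sum_range]
      refine Finset.sum_congr rfl fun l _ => ?_
      rw [hCSp i l]
      simp only [hF]
      by_cases h : (l : ℕ) < s'
      · rw [dif_pos h, dif_pos h]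
      · rw [dif_neg h, dif_neg h]; norm_num
    have e2 : ∑ j : Fin s', b ^ 2 * (C i j) ^ 2 = ∑ k ∈ Finset.range s', H k := by
      rw [← Fin.sum_univ_eq_sum_range]
      refine Finset.sum_congr rfl fun j _ => ?_
      simp only [hH]
      rw [dif_pos j.isLt]
    rw [e1, e2]
    calc ∑ k ∈ Finset.range t', F k
        ≤ ∑ k ∈ Finset.range (max s' t'), F k :=
          Finset.sum_le_sum_of_subset_of_nonneg
            (Finset.range_subset_range.mpr (le_max_right _ _)) (fun k _ _ => hF0 k)
      _ ≤ ∑ k ∈ Finset.range (max s' t'), H k := Finset.sum_le_sum fun k _ => hFH k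
      _ = ∑ k ∈ Finset.range s', H k := by
          refine (Finset.sum_subset (Finset.range_subset_range.mpr (le_max_left _ _)) ?_).symm
          intro k _ hk
          rw [Finset.mem_range, not_lt] at hk
          simp only [hH]
          rw [dif_neg (by omega : ¬ k < s')]
  rw [ge_iff_le, h1, h2, h3]
  rcases eq_or_lt_of_le hδ0 with hδz | hδpos
  · have hbz : b = 0 := le_antisymm (by rw [← hδz] at hgap; exact hgap) hb0
    have hβ : b ^ 2 / δ ^ 2 = 0 := by rw [hbz, ← hδz]; norm_num
    have hcz : c = 0 := by
      have hcle : c ≤ 0 := by rw [hbz] at hcb; simpa using hcb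
      linarith
    rw [hβ, hcz]
    norm_num
    linarith [hτP]
  · have hδne : δ ≠ 0 := ne_of_gt hδpos
    have hδ2 : (0:ℝ) < δ ^ 2 := pow_pos hδpos 2
    have hβ0 : 0 ≤ b ^ 2 / δ ^ 2 := by positivity
    have hβ1 : b ^ 2 / δ ^ 2 ≤ 1 := by
      rw [div_le_one hδ2]; nlinarith [hgap, hb0]
    have hβTP : c ≤ b ^ 2 / δ ^ 2 * (T - P) := by
      have e : b ^ 2 * ρ = b ^ 2 / δ ^ 2 * (δ ^ 2 * ρ) := by
        field_simp
      calc c ≤ b ^ 2 * ρ := hcb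
        _ = b ^ 2 / δ ^ 2 * (δ ^ 2 * ρ) := e
        _ ≤ b ^ 2 / δ ^ 2 * (T - P) := mul_le_mul_of_nonneg_left hTP hβ0
    have hα0 : 0 ≤ (1 - b ^ 2 / δ ^ 2) / (1 + b ^ 2 / δ ^ 2) :=
      div_nonneg (by linarith) (by linarith)
    have step1 : (1 - b ^ 2 / δ ^ 2) / (1 + b ^ 2 / δ ^ 2) * ((T + P - 2 * τ) + c)
        ≤ (1 - b ^ 2 / δ ^ 2) / (1 + b ^ 2 / δ ^ 2) * ((T - P) + c) :=
      mul_le_mul_of_nonneg_left (by linarith [hτP]) hα0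
    have step2 : (1 - b ^ 2 / δ ^ 2) / (1 + b ^ 2 / δ ^ 2) * ((T - P) + c)
        ≤ T - (P + c) := by
      rw [div_mul_eq_mul_div, div_le_iff₀ (by positivity : (0:ℝ) < 1 + b ^ 2 / δ ^ 2)]
      nlinarith [hβTP]
    linarith [step1, step2]
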